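/- Let C be an additive category, X a covariantly finite subcategory such that every left X-approximation has a special n-cokernel with respect to X. Then there is a well-defined additive endofunctor Σ on the quotient category C/X, defined on objects by Σ A = B where A → X_1 → ⋯ → X_n → B is a chosen right n-exact sequence with A → X_1 a left X-approximation and all X_i ∈ X, and on morphisms by lifting along the approximations; the assignment on morphisms is independent of the chosen lift modulo morphisms factoring through X. -/

import Mathlib

open CategoryTheory Limits

universe v u

variable {C : Type u} [Category.{v} C]

section Defs
variable [Preadditive C]

/-- `g` is a weak cokernel of `f`: `g ∘ f = 0` and every morphism killing `f`
factors (not necessarily uniquely) through `g`. -/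
def IsWeakCokernel {A B X : C} (f : A ⟶ B) (g : B ⟶ X) : Prop :=
  f ≫ g = 0 ∧ ∀ ⦃D : C⦄ (h : B ⟶ D), f ≫ h = 0 → ∃ k : X ⟶ D, h = g ≫ k

/-- `g` is a cokernel of `f`. -/
def IsCokernelOf {A B X : C} (f : A ⟶ B) (g : B ⟶ X) : Prop :=
  f ≫ g = 0 ∧ ∀ ⦃D : C⦄ (h : B ⟶ D), f ≫ h = 0 → ∃! k : X ⟶ D, h = g ≫ k

/-- `f` is a weak kernel of `g`. -/
def IsWeakKernel {A B X : C} (g : B ⟶ X) (f : A ⟶ B) : Prop :=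
  f ≫ g = 0 ∧ ∀ ⦃D : C⦄ (h : D ⟶ B), h ≫ g = 0 → ∃ k : D ⟶ A, h = k ≫ f

/-- `f` is a kernel of `g`. -/
def IsKernelOf {A B X : C} (g : B ⟶ X) (f : A ⟶ B) : Prop :=
  f ≫ g = 0 ∧ ∀ ⦃D : C⦄ (h : D ⟶ B), h ≫ g = 0 → ∃! k : D ⟶ A, h = k ≫ f

/-- The sequence `X 0 → X 1 → ⋯ → X (n+1)` is right `n`-exact, i.e.
`(d 1, …, d n)` is an `n`-cokernel of `d 0`: each `d (k+1)` with `k + 2 ≤ n` is a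
weak cokernel of `d k`, and `d n` is a cokernel of `d (n-1)`. -/
def IsRightNExactSeq (n : ℕ) (X : ℕ → C) (d : ∀ i, X i ⟶ X (i + 1)) : Prop :=
  (∀ k, k + 2 ≤ n → IsWeakCokernel (d k) (d (k + 1))) ∧ IsCokernelOf (d (n - 1)) (d (n - 1 + 1))

/-- The sequence `X 0 → X 1 → ⋯ → X (n+1)` is left `n`-exact. -/
def IsLeftNExactSeq (n : ℕ) (X : ℕ → C) (d : ∀ i, X i ⟶ X (i + 1)) : Prop :=
  (∀ k, k + 2 ≤ n → IsWeakKernel (d (k + 1)) (d k)) ∧ IsKernelOf (d 1) (d 0)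

/-- `f : A ⟶ B` is `X`-monic with respect to the subcategory given by the predicate `P`:
every morphism from `A` to an object of `P` factors through `f`. -/
def XMonic (P : C → Prop) {A B : C} (f : A ⟶ B) : Prop :=
  ∀ ⦃M : C⦄, P M → ∀ g : A ⟶ M, ∃ h : B ⟶ M, g = f ≫ h

/-- `f` is `X`-epic. -/
def XEpic (P : C → Prop) {A B : C} (f : A ⟶ B) : Prop :=
  ∀ ⦃M : C⦄, P M → ∀ g : M ⟶ B, ∃ h : M ⟶ A, g = h ≫ f

/-- `(-1)^k • f`. -/
def psign (k : ℕ) {A B : C} (f : A ⟶ B) : A ⟶ B := if Even k then f else -f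

/-- `f : A ⟶ B` has an `n`-cokernel. -/
def HasNCokernel (n : ℕ) {A B : C} (f : A ⟶ B) : Prop :=
  ∃ (X : ℕ → C) (d : ∀ i, X i ⟶ X (i + 1)) (e0 : X 0 = A) (e1 : X 1 = B),
    d 0 = eqToHom e0 ≫ f ≫ eqToHom e1.symm ∧ IsRightNExactSeq n X d

/-- `f : A ⟶ B` has a special `n`-cokernel with respect to `P`: an `n`-cokernel all of whose
intermediate objects lie in `P`. -/
def HasSpecialNCokernel (P : C → Prop) (n : ℕ) {A B : C} (f : A ⟶ B) : Prop :=
  ∃ (X : ℕ → C) (d : ∀ i, X i ⟶ X (i + 1)) (e0 : X 0 = A) (e1 : X 1 = B),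
    d 0 = eqToHom e0 ≫ f ≫ eqToHom e1.symm ∧ IsRightNExactSeq n X d ∧
    ∀ i, 2 ≤ i → i ≤ n → P (X i)

end Defs

section QuotCat
variable [Preadditive C]

/-- Morphisms factoring through an object of the subcategory `P`. -/
def xSet (P : C → Prop) (A B : C) : Set (A ⟶ B) :=
  {f | ∃ (M : C) (u : A ⟶ M) (v : M ⟶ B), P M ∧ f = u ≫ v}

/-- The ideal `[X](A,B)` of morphisms factoring through `P`, as an additive subgroup
(when `P` is closed under finite direct sums this is just `xSet P A B`). -/
def xSub (P : C → Prop) (A B : C) : AddSubgroup (A ⟶ B) :=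
  AddSubgroup.closure (xSet P A B)

lemma xSub_comp_left (P : C → Prop) {A B C' : C} {f : A ⟶ B} (hf : f ∈ xSub P A B)
    (g : B ⟶ C') : f ≫ g ∈ xSub P A C' := by
  induction hf using AddSubgroup.closure_induction with
  | mem x hx =>
      obtain ⟨M, u, v, hM, rfl⟩ := hx
      exact AddSubgroup.subset_closure ⟨M, u, v ≫ g, hM, by simp⟩
  | zero => simpa using (xSub P A C').zero_mem
  | add x y _ _ hx hy => simpa [Preadditive.add_comp] using (xSub P A C').add_mem hx hy
  | neg x _ hx => simpa [Preadditive.neg_comp] using (xSub P A C').neg_mem hx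

lemma xSub_comp_right (P : C → Prop) {A B C' : C} (g : A ⟶ B) {f : B ⟶ C'}
    (hf : f ∈ xSub P B C') : g ≫ f ∈ xSub P A C' := by
  induction hf using AddSubgroup.closure_induction with
  | mem x hx =>
      obtain ⟨M, u, v, hM, rfl⟩ := hx
      exact AddSubgroup.subset_closure ⟨M, g ≫ u, v, hM, by simp⟩
  | zero => simpa using (xSub P A C').zero_mem
  | add x y _ _ hx hy => simpa [Preadditive.comp_add] using (xSub P A C').add_mem hx hy
  | neg x _ hx => simpa [Preadditive.comp_neg] using (xSub P A C').neg_mem hx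

/-- The quotient category `C/X`: same objects as `C`. -/
structure QObj (P : C → Prop) : Type u where
  obj : C

variable (P : C → Prop)

instance QObj.category : Category.{v} (QObj P) where
  Hom A B := (A.obj ⟶ B.obj) ⧸ xSub P A.obj B.obj
  id A := QuotientAddGroup.mk (𝟙 A.obj)
  comp {A B C'} x y :=
    Quotient.liftOn₂ x y (fun a b => QuotientAddGroup.mk (a ≫ b)) (by
      intro a b a' b' ha hb
      have ha' : -a + a' ∈ xSub P _ _ := QuotientAddGroup.leftRel_apply.mp ha
      have hb' : -b + b' ∈ xSub P _ _ := QuotientAddGroup.leftRel_apply.mp hb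
      apply Quotient.sound
      refine QuotientAddGroup.leftRel_apply.mpr ?_
      have : -(a ≫ b) + a' ≫ b' = (-a + a') ≫ b + a' ≫ (-b + b') := by
        simp only [Preadditive.add_comp, Preadditive.comp_add, Preadditive.neg_comp, Preadditive.comp_neg]
        abel
      rw [this]
      exact AddSubgroup.add_mem _ (xSub_comp_left P ha' b) (xSub_comp_right P a' hb'))
  id_comp x := by
    induction x using Quotient.inductionOn with
    | h a => exact congrArg QuotientAddGroup.mk (Category.id_comp a)
  comp_id x := by
    induction x using Quotient.inductionOn with
    | h a => exact congrArg QuotientAddGroup.mk (Category.comp_id a)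
  assoc x y z := by
    induction x using Quotient.inductionOn with
    | h a =>
      induction y using Quotient.inductionOn with
      | h b =>
        induction z using Quotient.inductionOn with
        | h c => exact congrArg QuotientAddGroup.mk (Category.assoc a b c)

instance QObj.preadditive : Preadditive (QObj P) where
  homGroup A B := inferInstanceAs (AddCommGroup ((A.obj ⟶ B.obj) ⧸ xSub P A.obj B.obj))
  add_comp A B C' x x' y := by
    induction x using Quotient.inductionOn with
    | h a =>
      induction x' using Quotient.inductionOn with
      | h a' =>
        induction y using Quotient.inductionOn with
        | h b => exact congrArg QuotientAddGroup.mk (Preadditive.add_comp _ _ _ a a' b)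
  comp_add A B C' x y y' := by
    induction x using Quotient.inductionOn with
    | h a =>
      induction y using Quotient.inductionOn with
      | h b =>
        induction y' using Quotient.inductionOn with
        | h b' => exact congrArg QuotientAddGroup.mk (Preadditive.comp_add _ _ _ a b b')

/-- The quotient functor `C ⥤ C/X`. -/
def toQ : C ⥤ QObj P where
  obj A := ⟨A⟩
  map f := QuotientAddGroup.mk f
  map_id _ := rfl
  map_comp _ _ := rfl

/-- Image of an object of `C` in `C/X`. -/
abbrev qObj (A : C) : QObj P := ⟨A⟩

/-- Image of a morphism of `C` in `C/X`. -/
abbrev qMap {A B : C} (f : A ⟶ B) : qObj P A ⟶ qObj P B := QuotientAddGroup.mk f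

open ZeroObject in
instance [HasZeroObject C] : HasZeroObject (QObj P) := by
  refine ⟨qObj P 0, ?_⟩
  rw [IsZero.iff_id_eq_zero]
  have h : (𝟙 (qObj P 0)) = qMap P (𝟙 (0 : C)) := rfl
  rw [h, show (𝟙 (0 : C)) = 0 from by simp]
  exact QuotientAddGroup.mk_zero (xSub P 0 0)

instance [HasBinaryBiproducts C] : HasBinaryBiproducts (QObj P) where
  has_binary_biproduct A B := by
    refine HasBinaryBiproduct.mk ⟨?_, ?_⟩
    · exact
        { pt := qObj P (A.obj ⊞ B.obj)
          fst := qMap P biprod.fst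
          snd := qMap P biprod.snd
          inl := qMap P biprod.inl
          inr := qMap P biprod.inr
          inl_fst := congrArg (QuotientAddGroup.mk) biprod.inl_fst
          inl_snd := congrArg (QuotientAddGroup.mk) biprod.inl_snd
          inr_fst := congrArg (QuotientAddGroup.mk) biprod.inr_fst
          inr_snd := congrArg (QuotientAddGroup.mk) biprod.inr_snd }
    · apply isBinaryBilimitOfTotal
      show qMap P biprod.fst ≫ qMap P biprod.inl + qMap P biprod.snd ≫ qMap P biprod.inr = qMap P (𝟙 _)
      show qMap P (biprod.fst ≫ biprod.inl) + qMap P (biprod.snd ≫ biprod.inr) = _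
      rw [show qMap P (biprod.fst ≫ biprod.inl) + qMap P (biprod.snd ≫ biprod.inr)
            = qMap P (biprod.fst ≫ biprod.inl + biprod.snd ≫ biprod.inr) from rfl]
      exact congrArg QuotientAddGroup.mk biprod.total

end QuotCat

section Aux

variable [Preadditive C]

lemma rightExact_wc {m : ℕ} {X : ℕ → C} {d : ∀ i, X i ⟶ X (i + 1)}
    (h : IsRightNExactSeq (m + 1) X d) :
    ∀ k, k + 1 ≤ m + 1 → IsWeakCokernel (d k) (d (k + 1)) := by
  intro k hk
  rcases Nat.lt_or_ge k m with h1 | h1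
  · exact h.1 k (by omega)
  · obtain rfl : k = m := by omega
    have h2 : IsCokernelOf (d k) (d (k + 1)) := h.2
    exact ⟨h2.1, fun D hh hz => ((h2.2 hh hz).exists)⟩

lemma exists_factor_of_mem_xSub [HasBinaryBiproducts C] (P : C → Prop)
    (hPsum : ∀ {A B : C}, P A → P B → P (A ⊞ B)) {M0 : C} (hM0 : P M0)
    {A B : C} {f : A ⟶ B} (hf : f ∈ xSub P A B) :
    ∃ (M : C) (u : A ⟶ M) (v : M ⟶ B), P M ∧ f = u ≫ v := by
  induction hf using AddSubgroup.closure_induction with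
  | mem x hx => exact hx
  | zero => exact ⟨M0, 0, 0, hM0, by simp⟩
  | add x y _ _ ihx ihy =>
      obtain ⟨M, u, v, hM, rfl⟩ := ihx
      obtain ⟨M', u', v', hM', rfl⟩ := ihy
      exact ⟨M ⊞ M', biprod.lift u u', biprod.desc v v', hPsum hM hM', by simp⟩
  | neg x _ ihx =>
      obtain ⟨M, u, v, hM, rfl⟩ := ihx
      exact ⟨M, -u, v, hM, by simp⟩

lemma chain_exists (P : C → Prop) (n : ℕ)
    {XA XA' : ℕ → C} (dA : ∀ i, XA i ⟶ XA (i + 1)) (dA' : ∀ i, XA' i ⟶ XA' (i + 1))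
    (hmono : XMonic P (dA 0)) (hP'1 : P (XA' 1))
    (hwc : ∀ k, k + 1 ≤ n → IsWeakCokernel (dA k) (dA (k + 1)))
    (hzero' : ∀ k, k + 1 ≤ n → dA' k ≫ dA' (k + 1) = 0)
    (f0 : XA 0 ⟶ XA' 0) :
    ∃ x : ∀ i, XA i ⟶ XA' i, x 0 = f0 ∧
      ∀ i, i ≤ n → dA i ≫ x (i + 1) = x i ≫ dA' i := by
  have step0 : ∃ v : XA 1 ⟶ XA' 1, dA 0 ≫ v = f0 ≫ dA' 0 := by
    obtain ⟨h, hh⟩ := hmono hP'1 (f0 ≫ dA' 0)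
    exact ⟨h, hh.symm⟩
  have stepS : ∀ (k : ℕ) (u : XA k ⟶ XA' k) (v : XA (k + 1) ⟶ XA' (k + 1)),
      (k ≤ n → dA k ≫ v = u ≫ dA' k) → ∃ w : XA (k + 2) ⟶ XA' (k + 2),
        (k + 1 ≤ n → dA (k + 1) ≫ w = v ≫ dA' (k + 1)) := by
    intro k u v hsq
    by_cases h : k + 1 ≤ n
    · have h0 : dA k ≫ (v ≫ dA' (k + 1)) = 0 := by
        rw [← Category.assoc, hsq (by omega), Category.assoc, hzero' k h, comp_zero]
      obtain ⟨w, hw⟩ := (hwc k h).2 _ h0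
      exact ⟨w, fun _ => hw.symm⟩
    · exact ⟨0, fun hk => absurd hk h⟩
  let F : ∀ i, Σ' (u : XA i ⟶ XA' i) (v : XA (i + 1) ⟶ XA' (i + 1)),
      (i ≤ n → dA i ≫ v = u ≫ dA' i) :=
    fun i => Nat.rec
      ⟨f0, step0.choose, fun _ => step0.choose_spec⟩
      (fun k ih => ⟨ih.2.1, (stepS k ih.1 ih.2.1 ih.2.2).choose,
        (stepS k ih.1 ih.2.1 ih.2.2).choose_spec⟩) i
  exact ⟨fun i => (F i).1, rfl, fun i hi => (F i).2.2 hi⟩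

lemma chain_factors (P : C → Prop) (m : ℕ)
    {XA XA' : ℕ → C} (dA : ∀ i, XA i ⟶ XA (i + 1)) (dA' : ∀ i, XA' i ⟶ XA' (i + 1))
    (hmono : XMonic P (dA 0))
    (hwc : ∀ k, k + 1 ≤ m + 1 → IsWeakCokernel (dA k) (dA (k + 1)))
    (hcok : IsCokernelOf (dA m) (dA (m + 1)))
    (hzero' : ∀ k, k + 1 ≤ m + 1 → dA' k ≫ dA' (k + 1) = 0)
    {M : C} (hM : P M) (u : XA 0 ⟶ M) (v : M ⟶ XA' 0)
    (z : ∀ i, XA i ⟶ XA' i) (hz0 : z 0 = u ≫ v)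
    (hsq : ∀ i, i ≤ m + 1 → dA i ≫ z (i + 1) = z i ≫ dA' i) :
    ∃ h : XA (m + 2) ⟶ XA' (m + 1), z (m + 2) = h ≫ dA' (m + 1) := by
  obtain ⟨t, ht⟩ := hmono hM u
  have base : ∃ b : XA 2 ⟶ XA' 1,
      (0 + 1 ≤ m + 1 → z (0 + 1) = dA (0 + 1) ≫ b + (t ≫ v) ≫ dA' 0) := by
    have h0 : dA 0 ≫ (z 1 - (t ≫ v) ≫ dA' 0) = 0 := by
      rw [Preadditive.comp_sub, hsq 0 (by omega), hz0, ht]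
      simp
    obtain ⟨b, hb⟩ := (hwc 0 (by omega)).2 _ h0
    refine ⟨b, fun _ => ?_⟩
    rw [← hb]; abel
  have stepS : ∀ (k : ℕ) (a : XA (k + 1) ⟶ XA' k) (b : XA (k + 2) ⟶ XA' (k + 1)),
      (k + 1 ≤ m + 1 → z (k + 1) = dA (k + 1) ≫ b + a ≫ dA' k) →
      ∃ c : XA (k + 3) ⟶ XA' (k + 2),
        (k + 1 + 1 ≤ m + 1 → z (k + 1 + 1) = dA (k + 1 + 1) ≫ c + b ≫ dA' (k + 1)) := by
    intro k a b hinv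
    by_cases h : k + 2 ≤ m + 1
    · have h0 : dA (k + 1) ≫ (z (k + 2) - b ≫ dA' (k + 1)) = 0 := by
        rw [Preadditive.comp_sub, hsq (k + 1) (by omega), hinv (by omega),
          Preadditive.add_comp]
        simp [hzero' k (by omega)]
      obtain ⟨c, hc⟩ := (hwc (k + 1) (by omega)).2 _ h0
      refine ⟨c, fun _ => ?_⟩
      rw [← hc]; abel
    · exact ⟨0, fun hk => absurd hk h⟩
  let G : ∀ k, Σ' (a : XA (k + 1) ⟶ XA' k) (b : XA (k + 2) ⟶ XA' (k + 1)),
      (k + 1 ≤ m + 1 → z (k + 1) = dA (k + 1) ≫ b + a ≫ dA' k) :=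
    fun k => Nat.rec ⟨t ≫ v, base.choose, base.choose_spec⟩
      (fun k ih => ⟨ih.2.1, (stepS k ih.1 ih.2.1 ih.2.2).choose,
        (stepS k ih.1 ih.2.1 ih.2.2).choose_spec⟩) k
  obtain ⟨a, b, hinv⟩ := G m
  refine ⟨b, ?_⟩
  have hq : dA (m + 1) ≫ (z (m + 2) - b ≫ dA' (m + 1)) = 0 := by
    rw [Preadditive.comp_sub, hsq (m + 1) (by omega), hinv (by omega),
      Preadditive.add_comp]
    simp [hzero' m (by omega)]
  have hker : dA m ≫ (dA (m + 1) ≫ (z (m + 2) - b ≫ dA' (m + 1))) = 0 := by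
    rw [hq]; simp
  obtain ⟨k', hk', huniq⟩ := hcok.2 _ hker
  have h1 := huniq (z (m + 2) - b ≫ dA' (m + 1)) rfl
  have h2 := huniq 0 (by simp [hq])
  have e1 : z (m + 2) - b ≫ dA' (m + 1) = 0 := by rw [h1, ← h2]
  have := sub_eq_zero.mp e1
  exact this

end Aux

/-- Proposition 3.1. Let `C` be an additive category and `X` (given by `P`)
a covariantly finite subcategory such that every left `X`-approximation has a special
`n`-cokernel with respect to `X`.  Fix, for every object `A`, a right `n`-exact sequence
`A = XX A 0 → XX A 1 → ⋯ → XX A n → XX A (n+1)` whose first morphism is a left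
`X`-approximation and whose objects `XX A 1, …, XX A n` lie in `X`.
Then there is a well-defined additive endofunctor `Σ` of `C/X` with `Σ A = XX A (n+1)`,
which sends (the class of) `φ : A ⟶ A'` to (the class of) `x (n+1)` for any lift
`x` of `φ` along the chosen sequences. -/
theorem sigma_functor_exists
    [Preadditive C] [HasZeroObject C] [HasFiniteBiproducts C] [HasBinaryBiproducts C]
    (P : C → Prop) (n : ℕ) (hn : 1 ≤ n)
    -- `X` is closed under isomorphisms, direct sums and direct summands
    (hPiso : ∀ {A B : C}, P A → (A ≅ B) → P B)
    (hPsum : ∀ {A B : C}, P A → P B → P (A ⊞ B))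
    (hPsummand : ∀ {A M : C}, P M → ∀ (i : A ⟶ M) (p : M ⟶ A), i ≫ p = 𝟙 A → P A)
    -- `X` is covariantly finite
    (hCov : ∀ A : C, ∃ (M : C) (f : A ⟶ M), P M ∧ XMonic P f)
    -- every left `X`-approximation has a special `n`-cokernel with respect to `X`
    (hSpecial : ∀ {A M : C} (f : A ⟶ M), P M → XMonic P f → HasSpecialNCokernel P n f)
    -- the chosen sequences
    (XX : C → ℕ → C) (dd : ∀ A i, XX A i ⟶ XX A (i + 1)) (eX : ∀ A : C, XX A 0 = A)
    (hXexact : ∀ A, IsRightNExactSeq n (XX A) (dd A))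
    (hXP : ∀ A i, 1 ≤ i → i ≤ n → P (XX A i))
    (hXmono : ∀ A, XMonic P (dd A 0)) :
    ∃ (S : QObj P ⥤ QObj P) (hobj : ∀ A : C, S.obj (qObj P A) = qObj P (XX A (n + 1))),
      S.Additive ∧
      ∀ (A A' : C) (φ : A ⟶ A') (x : ∀ i, XX A i ⟶ XX A' i),
        x 0 = eqToHom (eX A) ≫ φ ≫ eqToHom (eX A').symm →
        (∀ i, dd A i ≫ x (i + 1) = x i ≫ dd A' i) →
        S.map (qMap P φ) = eqToHom (hobj A) ≫ qMap P (x (n + 1)) ≫ eqToHom (hobj A').symm := by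
  obtain ⟨m, rfl⟩ : ∃ m, n = m + 1 := ⟨n - 1, by omega⟩
  -- chains lifting each morphism
  have hchain : ∀ (A A' : C) (f : A ⟶ A'), ∃ x : ∀ i, XX A i ⟶ XX A' i,
      x 0 = eqToHom (eX A) ≫ f ≫ eqToHom (eX A').symm ∧
      ∀ i, i ≤ m + 1 → dd A i ≫ x (i + 1) = x i ≫ dd A' i := by
    intro A A' f
    exact chain_exists P (m + 1) (dd A) (dd A') (hXmono A)
      (hXP A' 1 (by omega) (by omega)) (rightExact_wc (hXexact A))
      (fun k hk => (rightExact_wc (hXexact A') k hk).1) _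
  choose L hL0 hLsq using hchain
  -- key well-definedness statement
  have key : ∀ (A A' : C) (f g : A ⟶ A') (x y : ∀ i, XX A i ⟶ XX A' i),
      x 0 = eqToHom (eX A) ≫ f ≫ eqToHom (eX A').symm →
      (∀ i, i ≤ m + 1 → dd A i ≫ x (i + 1) = x i ≫ dd A' i) →
      y 0 = eqToHom (eX A) ≫ g ≫ eqToHom (eX A').symm →
      (∀ i, i ≤ m + 1 → dd A i ≫ y (i + 1) = y i ≫ dd A' i) →
      f - g ∈ xSub P A A' →
      x (m + 2) - y (m + 2) ∈ xSub P (XX A (m + 2)) (XX A' (m + 2)) := by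
    intro A A' f g x y hx0 hxs hy0 hys hfg
    have hmem : (x 0 - y 0) ∈ xSub P (XX A 0) (XX A' 0) := by
      have hz0 : (x 0 - y 0) = eqToHom (eX A) ≫ (f - g) ≫ eqToHom (eX A').symm := by
        rw [hx0, hy0]; simp [Preadditive.comp_sub, Preadditive.sub_comp]
      rw [hz0]
      exact xSub_comp_right P _ (xSub_comp_left P hfg _)
    obtain ⟨M, u, v, hM, huv⟩ :=
      exists_factor_of_mem_xSub P hPsum (hXP A' 1 (by omega) (by omega)) hmem
    obtain ⟨h, hh⟩ := chain_factors P m (dd A) (dd A') (hXmono A)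
      (rightExact_wc (hXexact A)) ((hXexact A).2)
      (fun k hk => (rightExact_wc (hXexact A') k hk).1) hM u v
      (fun i => x i - y i) huv
      (fun i hi => by
        rw [Preadditive.comp_sub, Preadditive.sub_comp, hxs i hi, hys i hi])
    have : x (m + 2) - y (m + 2) = h ≫ dd A' (m + 1) := hh
    rw [this]
    exact AddSubgroup.subset_closure
      ⟨XX A' (m + 1), h, dd A' (m + 1), hXP A' (m + 1) (by omega) (by omega), rfl⟩
  -- mk of morphisms differing by xSub are equal
  have mkeq : ∀ {X Y : C} (a b : X ⟶ Y), a - b ∈ xSub P X Y →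
      (QuotientAddGroup.mk a : qObj P X ⟶ qObj P Y) = QuotientAddGroup.mk b := by
    intro X Y a b hab
    apply Quotient.sound
    refine QuotientAddGroup.leftRel_apply.mpr ?_
    simpa [neg_sub, sub_eq_neg_add] using (xSub P X Y).neg_mem hab
  -- the functor
  let S : QObj P ⥤ QObj P :=
    { obj := fun A => qObj P (XX A.obj (m + 1 + 1))
      map := fun {A B} φ => Quotient.liftOn φ
        (fun f => (QuotientAddGroup.mk (L A.obj B.obj f (m + 1 + 1)) :
          qObj P (XX A.obj (m + 1 + 1)) ⟶ qObj P (XX B.obj (m + 1 + 1))))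
        (by
          intro a b hab
          have hab' : -a + b ∈ xSub P A.obj B.obj := QuotientAddGroup.leftRel_apply.mp hab
          have hba : a - b ∈ xSub P A.obj B.obj := by
            have h := (xSub P A.obj B.obj).neg_mem hab'
            rwa [show -(-a + b) = a - b by abel] at h
          exact mkeq _ _ (key A.obj B.obj a b (L A.obj B.obj a) (L A.obj B.obj b)
            (hL0 _ _ a) (hLsq _ _ a) (hL0 _ _ b) (hLsq _ _ b) hba))
      map_id := by
        intro A
        show (QuotientAddGroup.mk (L A.obj A.obj (𝟙 A.obj) (m + 1 + 1)) :
          qObj P _ ⟶ qObj P _) = QuotientAddGroup.mk (𝟙 (XX A.obj (m + 1 + 1)))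
        refine mkeq _ _ (key A.obj A.obj (𝟙 A.obj) (𝟙 A.obj) _ (fun i => 𝟙 (XX A.obj i))
          (hL0 _ _ _) (hLsq _ _ _) (by simp) (by simp) ?_)
        simp only [sub_self]
        exact (xSub P _ _).zero_mem
      map_comp := by
        intro A B C' φ ψ
        induction φ using Quotient.inductionOn with
        | h a =>
          induction ψ using Quotient.inductionOn with
          | h b =>
            show (QuotientAddGroup.mk (L A.obj C'.obj (a ≫ b) (m + 1 + 1)) :
                qObj P _ ⟶ qObj P _) =
              QuotientAddGroup.mk (L A.obj B.obj a (m + 1 + 1) ≫ L B.obj C'.obj b (m + 1 + 1))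
            refine mkeq _ _ (key A.obj C'.obj (a ≫ b) (a ≫ b) _
              (fun i => L A.obj B.obj a i ≫ L B.obj C'.obj b i)
              (hL0 _ _ _) (hLsq _ _ _) ?_ ?_ ?_)
            · simp [hL0]
            · intro i hi
              rw [← Category.assoc, hLsq A.obj B.obj a i hi, Category.assoc,
                hLsq B.obj C'.obj b i hi, ← Category.assoc]
            · simp only [sub_self]
              exact (xSub P _ _).zero_mem }
  refine ⟨S, fun A => rfl, ⟨?_⟩, ?_⟩
  · -- additivity
    intro A B φ ψ
    induction φ using Quotient.inductionOn with
    | h a =>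
      induction ψ using Quotient.inductionOn with
      | h b =>
        have h1 : (QuotientAddGroup.mk a : A ⟶ B) + QuotientAddGroup.mk b =
            QuotientAddGroup.mk (a + b) := rfl
        rw [h1]
        show (QuotientAddGroup.mk (L A.obj B.obj (a + b) (m + 1 + 1)) :
            qObj P _ ⟶ qObj P _) =
          QuotientAddGroup.mk (L A.obj B.obj a (m + 1 + 1)) +
            QuotientAddGroup.mk (L A.obj B.obj b (m + 1 + 1))
        have h2 : (QuotientAddGroup.mk (L A.obj B.obj a (m + 1 + 1)) :
            qObj P (XX A.obj (m + 1 + 1)) ⟶ qObj P (XX B.obj (m + 1 + 1))) +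
            QuotientAddGroup.mk (L A.obj B.obj b (m + 1 + 1)) =
            QuotientAddGroup.mk (L A.obj B.obj a (m + 1 + 1) + L A.obj B.obj b (m + 1 + 1)) := rfl
        rw [h2]
        refine mkeq _ _ (key A.obj B.obj (a + b) (a + b) _
          (fun i => L A.obj B.obj a i + L A.obj B.obj b i)
          (hL0 _ _ _) (hLsq _ _ _) ?_ ?_ ?_)
        · simp [hL0, Preadditive.add_comp, Preadditive.comp_add]
        · intro i hi
          rw [Preadditive.comp_add, Preadditive.add_comp, hLsq A.obj B.obj a i hi,
            hLsq A.obj B.obj b i hi]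
        · simp only [sub_self]
          exact (xSub P _ _).zero_mem
  · -- the description of the action on morphisms
    intro A A' φ x hx0 hxsq
    show (QuotientAddGroup.mk (L A A' φ (m + 1 + 1)) : qObj P _ ⟶ qObj P _) =
      eqToHom rfl ≫ qMap P (x (m + 1 + 1)) ≫ eqToHom rfl
    rw [eqToHom_refl, eqToHom_refl, Category.comp_id, Category.id_comp]
    refine mkeq _ _ (key A A' φ φ _ x (hL0 _ _ _) (hLsq _ _ _) hx0
      (fun i _ => hxsq i) ?_)
    simp only [sub_self]
    exact (xSub P _ _).zero_mem
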